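/- M^[n−d](d, n) = C(n, d) − 1 for 0 < d < n: with test sets of size exactly n − d, the optimal worst-case number of tests to identify the d defectives equals binomial(n, d) minus one. -/

import Mathlib

/-- An adaptive group-testing strategy on a population of `n` items:
a binary decision tree whose internal nodes test a subset (branching on
contaminated / pure) and whose leaves output a guess for the defective set. -/
inductive GTTree (n : ℕ) : Type where
  | leaf (guess : Finset (Fin n)) : GTTree n
  | node (test : Finset (Fin n)) (pos neg : GTTree n) : GTTree n

/-- Run the strategy when the true defective set is `D`. -/
def GTTree.run {n : ℕ} (D : Finset (Fin n)) : GTTree n → Finset (Fin n)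
  | .leaf g => g
  | .node t p q => if (t ∩ D).Nonempty then p.run D else q.run D

/-- Worst-case number of tests performed by the strategy. -/
def GTTree.depth {n : ℕ} : GTTree n → ℕ
  | .leaf _ => 0
  | .node _ p q => max p.depth q.depth + 1

/-- The strategy correctly identifies every possible defective set of size `d`. -/
def GTTree.Solves {n : ℕ} (T : GTTree n) (d : ℕ) : Prop :=
  ∀ D : Finset (Fin n), D.card = d → T.run D = D

/-- Every test set occurring in the tree has size exactly `k`. -/
def GTTree.SizeK {n : ℕ} (k : ℕ) : GTTree n → Prop
  | .leaf _ => True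
  | .node t p q => t.card = k ∧ p.SizeK k ∧ q.SizeK k

/-- `M d n`: optimal worst-case number of adaptive tests to find the `d`
defectives among `n` items, test sets of arbitrary size (`⊤` if unsolvable). -/
noncomputable def M (d n : ℕ) : ℕ∞ :=
  sInf {c : ℕ∞ | ∃ T : GTTree n, T.Solves d ∧ (T.depth : ℕ∞) = c}

/-- `Mfix k d n`: optimal worst-case number of adaptive tests to find the `d`
defectives among `n` items, every test set of size exactly `k` (`⊤` if unsolvable). -/
noncomputable def Mfix (k d n : ℕ) : ℕ∞ :=
  sInf {c : ℕ∞ | ∃ T : GTTree n, T.SizeK k ∧ T.Solves d ∧ (T.depth : ℕ∞) = c}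


open Finset

lemma compl_card' {n d : ℕ} {D : Finset (Fin n)} (hD : D.card = d) :
    Dᶜ.card = n - d := by
  rw [Finset.card_compl, hD, Fintype.card_fin]

lemma pos_test {n d : ℕ} {t D : Finset (Fin n)} (ht : t.card = n - d)
    (hD : D.card = d) (hne : D ≠ tᶜ) : (t ∩ D).Nonempty := by
  rw [Finset.nonempty_iff_ne_empty]
  intro h
  apply hne
  have hsub : t ⊆ Dᶜ := by
    intro x hx
    simp only [Finset.mem_compl]
    intro hxD
    exact Finset.notMem_empty x (h ▸ Finset.mem_inter.2 ⟨hx, hxD⟩)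
  have heq : t = Dᶜ := Finset.eq_of_subset_of_card_le hsub (by rw [compl_card' hD, ht])
  rw [heq, compl_compl]

def chain {n : ℕ} : List (Finset (Fin n)) → GTTree n
  | [] => .leaf ∅
  | [D] => .leaf D
  | D :: E :: rest => .node Dᶜ (chain (E :: rest)) (.leaf D)

lemma chain_depth {n : ℕ} : ∀ l : List (Finset (Fin n)), (chain l).depth ≤ l.length - 1
  | [] => by simp [chain, GTTree.depth]
  | [D] => by simp [chain, GTTree.depth]
  | D :: E :: rest => by
    have ih := chain_depth (E :: rest)
    simp only [chain, GTTree.depth, List.length, Nat.max_zero] at *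
    omega

lemma chain_sizeK {n d : ℕ} : ∀ l : List (Finset (Fin n)),
    (∀ A ∈ l, A.card = d) → (chain l).SizeK (n - d)
  | [], _ => trivial
  | [D], _ => trivial
  | D :: E :: rest, h => by
    refine ⟨compl_card' (h D (by simp)), chain_sizeK (E :: rest) ?_, trivial⟩
    intro A hA; exact h A (by simp [hA])

lemma chain_run {n d : ℕ} : ∀ l : List (Finset (Fin n)),
    (∀ A ∈ l, A.card = d) → ∀ D ∈ l, (chain l).run D = D
  | [], _, D, hmem => absurd hmem List.not_mem_nil
  | [D'], _, D, hmem => by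
    simp only [List.mem_singleton] at hmem
    simp [chain, GTTree.run, hmem]
  | D' :: E :: rest, h, D, hmem => by
    by_cases hDD : D = D'
    · subst hDD
      have hemp : Dᶜ ∩ D = ∅ := by ext x; simp
      simp [chain, GTTree.run, hemp]
    · have hpos : (D'ᶜ ∩ D).Nonempty := by
        apply pos_test (compl_card' (h D' (by simp))) (h D (by simp [hmem]))
        rwa [compl_compl]
      simp only [chain, GTTree.run, if_pos hpos]
      have hmem' : D ∈ E :: rest := by
        rcases List.mem_cons.1 hmem with h1 | h1
        · exact absurd h1 hDD
        · exact h1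
      exact chain_run (E :: rest) (fun A hA => h A (by simp [hA])) D hmem'

lemma lower_bound {n d : ℕ} : ∀ T : GTTree n, T.SizeK (n - d) →
    ∀ S : Finset (Finset (Fin n)), (∀ D ∈ S, D.card = d) →
    (∀ D ∈ S, T.run D = D) → S.card ≤ T.depth + 1
  | .leaf g, _, S, _, hrun => by
    have : S ⊆ {g} := fun D hD => by
      simp only [Finset.mem_singleton]
      have := hrun D hD
      simp only [GTTree.run] at this
      exact this.symm
    calc S.card ≤ ({g} : Finset _).card := Finset.card_le_card this
      _ = 1 := Finset.card_singleton g
      _ ≤ _ := le_add_self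
  | .node t p q, hk, S, hcard, hrun => by
    obtain ⟨ht, hkp, hkq⟩ := hk
    set S' := S.erase tᶜ with hS'
    have hrun' : ∀ D ∈ S', p.run D = D := by
      intro D hD
      have hDS : D ∈ S := Finset.mem_of_mem_erase hD
      have hne : D ≠ tᶜ := Finset.ne_of_mem_erase hD
      have hpos := pos_test ht (hcard D hDS) hne
      have := hrun D hDS
      simpa only [GTTree.run, if_pos hpos] using this
    have ih := lower_bound p hkp S' (fun D hD => hcard D (Finset.mem_of_mem_erase hD)) hrun'
    have h1 : S.card ≤ S'.card + 1 := by
      have : S ⊆ insert tᶜ S' := by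
        intro D hD
        rcases eq_or_ne D tᶜ with h | h
        · simp [h]
        · exact Finset.mem_insert_of_mem (Finset.mem_erase.2 ⟨h, hD⟩)
      calc S.card ≤ (insert tᶜ S').card := Finset.card_le_card this
        _ ≤ S'.card + 1 := Finset.card_insert_le _ _
    have h2 : p.depth ≤ (GTTree.node t p q).depth - 1 := by
      simp only [GTTree.depth]; omega
    simp only [GTTree.depth] at *
    omega

theorem stmt6 (d n : ℕ) (hd1 : 0 < d) (hd2 : d < n) :
    Mfix (n - d) d n = ((Nat.choose n d - 1 : ℕ) : ℕ∞) := by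
  have hd : d ≤ n := le_of_lt hd2
  set m := Nat.choose n d with hm
  have hmpos : 0 < m := Nat.choose_pos hd
  set l := (Finset.powersetCard d (Finset.univ : Finset (Fin n))).toList with hl
  have hlen : l.length = m := by
    rw [hl, Finset.length_toList, Finset.card_powersetCard, Finset.card_univ,
      Fintype.card_fin]
  have hmeml : ∀ A ∈ l, A.card = d := by
    intro A hA
    rw [hl, Finset.mem_toList, Finset.mem_powersetCard_univ] at hA
    exact hA
  apply le_antisymm
  · have hsolves : (chain l).Solves d := by
      intro D hD
      apply chain_run l hmeml D
      rw [hl, Finset.mem_toList, Finset.mem_powersetCard_univ]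
      exact hD
    refine le_trans (sInf_le ⟨chain l, chain_sizeK l hmeml, hsolves, rfl⟩) ?_
    have := chain_depth l
    rw [hlen] at this
    exact_mod_cast this
  · apply le_sInf
    rintro c ⟨T, hk, hsolve, rfl⟩
    have hS : ∀ D ∈ Finset.powersetCard d (Finset.univ : Finset (Fin n)), D.card = d := by
      intro D hD; rwa [Finset.mem_powersetCard_univ] at hD
    have hrun : ∀ D ∈ Finset.powersetCard d (Finset.univ : Finset (Fin n)), T.run D = D := by
      intro D hD; exact hsolve D (hS D hD)
    have := lower_bound T hk _ hS hrun
    rw [Finset.card_powersetCard, Finset.card_univ, Fintype.card_fin] at this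
    have : m - 1 ≤ T.depth := by omega
    exact_mod_cast this
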